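/- Let α ∈ (0,∞), δ ∈ (-1,∞) and x ∈ (0,∞). Then the series ∑_{k=0}^{∞} ((-δ)_k / k!) γ(α+k,x)/x^{α+k} converges, and its sum equals N(α,δ,x); that is, the partial sums ∑_{k=0}^{n-1} ((-δ)_k / k!) γ(α+k,x)/x^{α+k} tend to N(α,δ,x) as n → ∞. -/

import Mathlib

open MeasureTheory Real Filter

/-- The Pochhammer symbol `(a)_k = a (a+1) ⋯ (a+k-1)`, with `(a)_0 = 1`. -/
noncomputable def poch (a : ℝ) : ℕ → ℝ
  | 0 => 1
  | k + 1 => poch a k * (a + k)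

/-- The lower incomplete Gamma function `γ(ν,x) = ∫₀ˣ s^(ν-1) e^(-s) ds`. -/
noncomputable def lincGamma (ν x : ℝ) : ℝ := ∫ s in (0:ℝ)..x, s ^ (ν - 1) * Real.exp (-s)

/-- The reparametrized Kummer function `N(α,δ,x) = ∫₀¹ t^(α-1) (1-t)^δ e^(-xt) dt`. -/
noncomputable def NKummer (α δ x : ℝ) : ℝ :=
  ∫ t in (0:ℝ)..1, t ^ (α - 1) * (1 - t) ^ δ * Real.exp (-(x * t))

open Set

lemma poch_nonneg {a : ℝ} (ha : 0 ≤ a) (k : ℕ) : 0 ≤ poch a k := by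
  induction k with
  | zero => norm_num [poch]
  | succ k ih => exact mul_nonneg ih (by positivity)

lemma abs_poch_le {a b : ℝ} (hab : |a| ≤ b) (k : ℕ) : |poch a k| ≤ poch b k := by
  induction k with
  | zero => norm_num [poch]
  | succ k ih =>
    rw [poch, poch, abs_mul]
    have h1 : |a + k| ≤ b + k := by
      calc |a + k| ≤ |a| + k := by simpa using abs_add_le a k
      _ ≤ b + k := by linarith
    exact mul_le_mul ih h1 (abs_nonneg _) (poch_nonneg (le_trans (abs_nonneg a) hab) k)

lemma poch_tail {a : ℝ} {m : ℕ} (hm : 0 ≤ a + m) :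
    ∀ k, m ≤ k → ∃ q : ℝ, 0 ≤ q ∧ poch a k = poch a m * q := by
  intro k hk
  induction k, hk using Nat.le_induction with
  | base => exact ⟨1, by norm_num⟩
  | succ k hk ih =>
    obtain ⟨q, hq0, hq⟩ := ih
    refine ⟨q * (a + k), mul_nonneg hq0 ?_, by rw [poch, hq]; ring⟩
    have : (m : ℝ) ≤ k := by exact_mod_cast hk
    linarith

-- iterated derivative of (1-s)^δ
lemma iterDeriv_one_sub_rpow {δ t' : ℝ} (h0 : 0 < t') (h1 : t' < 1) (n : ℕ) :
    ∀ s ∈ Icc (0:ℝ) t',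
      iteratedDerivWithin n (fun s : ℝ => (1 - s) ^ δ) (Icc 0 t') s
        = poch (-δ) n * (1 - s) ^ (δ - n) := by
  induction n with
  | zero =>
    intro s _
    simp [iteratedDerivWithin_zero, poch]
  | succ n ih =>
    intro s hs
    have hud : UniqueDiffOn ℝ (Icc (0:ℝ) t') := uniqueDiffOn_Icc h0
    rw [iteratedDerivWithin_succ]
    have heq : Set.EqOn (iteratedDerivWithin n (fun s : ℝ => (1 - s) ^ δ) (Icc 0 t'))
        (fun s => poch (-δ) n * (1 - s) ^ (δ - n)) (Icc 0 t') := fun u hu => ih u hu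
    rw [derivWithin_congr heq (ih s hs)]
    have hs1 : (1:ℝ) - s ≠ 0 := by
      have := hs.2; intro h; nlinarith [hs.2]
    have hd : HasDerivAt (fun u : ℝ => (1 - u) ^ (δ - n))
        ((δ - n) * (1 - s) ^ (δ - n - 1) * (-1)) s := by
      have h1 : HasDerivAt (fun u : ℝ => u ^ (δ - n))
          ((δ - n) * (1 - s) ^ (δ - n - 1)) (1 - s) :=
        Real.hasDerivAt_rpow_const (Or.inl hs1)
      have h2 : HasDerivAt (fun u : ℝ => 1 - u) (-1) s := by
        simpa using (hasDerivAt_id s).const_sub 1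
      exact h1.comp s h2
    have hd' : HasDerivAt (fun u : ℝ => poch (-δ) n * (1 - u) ^ (δ - n))
        (poch (-δ) n * ((δ - n) * (1 - s) ^ (δ - n - 1) * (-1))) s := hd.const_mul _
    rw [hd'.hasDerivWithinAt.derivWithin (hud s hs)]
    rw [poch]
    push_cast
    ring_nf

lemma poch_pos {a : ℝ} (ha : 0 < a) (k : ℕ) : 0 < poch a k := by
  induction k with
  | zero => norm_num [poch]
  | succ k ih => exact mul_pos ih (by positivity)

lemma aux_tendsto_zero {B t : ℝ} (hB : 0 < B) (ht0 : 0 < t) (ht1 : t < 1) :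
    Tendsto (fun n : ℕ => poch B (n+1) / n.factorial * t ^ (n+1)) atTop (nhds 0) := by
  set f : ℕ → ℝ := fun n => poch B (n+1) / n.factorial * t ^ (n+1) with hf
  have hpos : ∀ n : ℕ, 0 < f n := fun n => by
    have h1 := poch_pos hB (n+1)
    have h2 : (0:ℝ) < n.factorial := by positivity
    positivity
  have hsum : Summable f := by
    apply summable_of_ratio_test_tendsto_lt_one ht1
    · exact Eventually.of_forall fun n => (hpos n).ne'
    · have key : ∀ n : ℕ, ‖f (n+1)‖ / ‖f n‖ = (B + (n:ℝ) + 1) / ((n:ℝ) + 1) * t := by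
        intro n
        rw [Real.norm_of_nonneg (hpos (n+1)).le, Real.norm_of_nonneg (hpos n).le]
        have e1 : poch B (n+2) = poch B (n+1) * (B + (n+1)) := by rw [poch]; push_cast; ring
        have e2 : ((n+1).factorial : ℝ) = (n.factorial : ℝ) * (n+1) := by
          rw [Nat.factorial_succ]; push_cast; ring
        have h1 := (poch_pos hB (n+1)).ne'
        have h2 : (n.factorial : ℝ) ≠ 0 := by positivity
        simp only [hf, e1, e2]
        field_simp
        ring
      simp only [key]
      have h0 : Tendsto (fun n : ℕ => (B + (n:ℝ) + 1) / ((n:ℝ) + 1)) atTop (nhds 1) := by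
        have h2 : Tendsto (fun n : ℕ => B / ((n:ℝ) + 1)) atTop (nhds 0) := by
          have := (tendsto_const_div_atTop_nhds_zero_nat B).comp (tendsto_add_atTop_nat 1)
          refine this.congr fun n => ?_
          simp [Function.comp]
        have h1 : Tendsto (fun n : ℕ => B / ((n:ℝ) + 1) + 1) atTop (nhds (0 + 1)) :=
          h2.add_const 1
        rw [show (0:ℝ) + 1 = 1 by norm_num] at h1
        refine h1.congr fun n => ?_
        have : ((n:ℝ) + 1) ≠ 0 := by positivity
        field_simp
        ring
      simpa using h0.mul_const t
  simpa using hsum.tendsto_atTop_zero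

lemma binom_tendsto {δ : ℝ} (hδ : -1 < δ) {t : ℝ} (ht0 : 0 < t) (ht1 : t < 1) :
    Tendsto (fun n : ℕ => ∑ k ∈ Finset.range n, poch (-δ) k / k.factorial * t ^ k)
      atTop (nhds ((1 - t) ^ δ)) := by
  set B : ℝ := |δ| + 1 with hB
  have hB0 : (0:ℝ) < B := by positivity
  have hBa : |(-δ)| ≤ B := by rw [abs_neg]; linarith [abs_nonneg δ]
  set M : ℝ := max 1 ((1 - t) ^ (δ - 1)) with hM
  have h1t : (0:ℝ) < 1 - t := by linarith
  -- remainder bound for partial sum with n+1 terms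
  have hrem : ∀ n : ℕ,
      |(1 - t) ^ δ - ∑ k ∈ Finset.range (n+1), poch (-δ) k / k.factorial * t ^ k|
        ≤ M * (poch B (n+1) / n.factorial * t ^ (n+1)) := by
    intro n
    have hcd : ContDiffOn ℝ n (fun s : ℝ => (1 - s) ^ δ) (Icc 0 t) := by
      intro s hs
      have hs1 : (1:ℝ) - s ≠ 0 := by
        have := hs.2; intro h; nlinarith
      have h1 : ContDiffAt ℝ n (fun u : ℝ => u ^ δ) (1 - s) :=
        Real.contDiffAt_rpow_const_of_ne hs1
      have h2 : ContDiffAt ℝ n (fun u : ℝ => (1:ℝ) - u) s := by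
        exact (contDiff_const.sub contDiff_id).contDiffAt
      exact (h1.comp s h2).contDiffWithinAt
    have hdiff : DifferentiableOn ℝ
        (iteratedDerivWithin n (fun s : ℝ => (1 - s) ^ δ) (Icc 0 t)) (Ioo 0 t) := by
      have : DifferentiableOn ℝ (fun s : ℝ => poch (-δ) n * (1 - s) ^ (δ - n)) (Ioo 0 t) := by
        intro s hs
        have hs1 : (1:ℝ) - s ≠ 0 := by have := hs.2; intro h; nlinarith
        have h1 : HasDerivAt (fun u : ℝ => (1 - u) ^ (δ - n))
            ((δ - n) * (1 - s) ^ (δ - n - 1) * (-1)) s := by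
          have ha : HasDerivAt (fun u : ℝ => u ^ (δ - n))
              ((δ - n) * (1 - s) ^ (δ - n - 1)) (1 - s) :=
            Real.hasDerivAt_rpow_const (Or.inl hs1)
          have hb : HasDerivAt (fun u : ℝ => 1 - u) (-1) s := by
            simpa using (hasDerivAt_id s).const_sub 1
          exact ha.comp s hb
        exact ((h1.const_mul (poch (-δ) n)).differentiableAt).differentiableWithinAt
      refine DifferentiableOn.congr this fun s hs => ?_
      exact iterDeriv_one_sub_rpow ht0 ht1 n s (Ioo_subset_Icc_self hs)
    obtain ⟨x', hx', hres⟩ := taylor_mean_remainder_cauchy ht0.ne (by rwa [uIcc_of_le ht0.le])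
      (by rwa [uIcc_of_le ht0.le, uIoo_of_le ht0.le])
    rw [uIcc_of_le ht0.le] at hres
    rw [uIoo_of_le ht0.le] at hx'
    -- rewrite taylor polynomial as the partial sum
    have htay : taylorWithinEval (fun s : ℝ => (1 - s) ^ δ) n (Icc 0 t) 0 t
        = ∑ k ∈ Finset.range (n+1), poch (-δ) k / k.factorial * t ^ k := by
      rw [taylor_within_apply]
      refine Finset.sum_congr rfl fun k hk => ?_
      rw [iterDeriv_one_sub_rpow ht0 ht1 k 0 (by constructor <;> norm_num [ht0.le])]
      simp only [sub_zero, Real.one_rpow, smul_eq_mul, mul_one]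
      ring
    rw [htay] at hres
    rw [hres]
    -- now bound the remainder
    rw [iterDeriv_one_sub_rpow ht0 ht1 (n+1) x' (Ioo_subset_Icc_self hx')]
    have hx0 : 0 < x' := hx'.1
    have hxt : x' < t := hx'.2
    have h1x : (0:ℝ) < 1 - x' := by linarith
    have habs : |poch (-δ) (n+1) * (1 - x') ^ (δ - (n+1:ℕ)) * (t - x') ^ n / (n.factorial : ℝ) * (t - 0)|
        ≤ M * (poch B (n+1) / n.factorial * t ^ (n+1)) := by
      rw [abs_mul, abs_div, abs_mul, abs_mul]
      have e0 : |t - 0| = t := by rw [sub_zero, abs_of_pos ht0]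
      rw [e0]
      have e1 : |(1 - x') ^ (δ - ((n+1:ℕ):ℝ))| = (1 - x') ^ (δ - (n+1:ℕ)) :=
        abs_of_pos (Real.rpow_pos_of_pos h1x _)
      have e2 : |(t - x') ^ n| = (t - x') ^ n := abs_of_nonneg (pow_nonneg (by linarith) n)
      have e3 : |(n.factorial : ℝ)| = (n.factorial : ℝ) := abs_of_pos (by positivity)
      rw [e1, e2, e3]
      -- key: (1-x')^(δ-n-1) * (t-x')^n ≤ M * t^n
      have key : (1 - x') ^ (δ - ((n+1:ℕ):ℝ)) * (t - x') ^ n ≤ M * t ^ n := by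
        have h1 : (t - x') ^ n ≤ (t * (1 - x')) ^ n := by
          apply pow_le_pow_left₀ (by linarith)
          nlinarith
        have h2 : (1 - x') ^ (δ - ((n+1:ℕ):ℝ)) * (t * (1 - x')) ^ n
            = (1 - x') ^ (δ - 1) * t ^ n := by
          rw [mul_pow, ← Real.rpow_natCast (1 - x') n]
          rw [← mul_assoc]
          rw [mul_comm ((1 - x') ^ (δ - ((n+1:ℕ):ℝ))) (t ^ n), mul_assoc,
            ← Real.rpow_add h1x]
          push_cast
          ring_nf
        have h3 : (1 - x') ^ (δ - 1) ≤ M := by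
          rcases le_or_gt (δ - 1) 0 with h | h
          · calc (1 - x') ^ (δ - 1) ≤ (1 - t) ^ (δ - 1) := by
                  exact Real.rpow_le_rpow_of_nonpos h1t (by linarith) h
              _ ≤ M := le_max_right _ _
          · calc (1 - x') ^ (δ - 1) ≤ 1 ^ (δ - 1) := by
                  apply Real.rpow_le_rpow (by linarith) (by linarith) h.le
              _ ≤ M := by rw [Real.one_rpow]; exact le_max_left _ _
        calc (1 - x') ^ (δ - ((n+1:ℕ):ℝ)) * (t - x') ^ n
            ≤ (1 - x') ^ (δ - ((n+1:ℕ):ℝ)) * (t * (1 - x')) ^ n := by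
              apply mul_le_mul_of_nonneg_left h1 (Real.rpow_pos_of_pos h1x _).le
          _ = (1 - x') ^ (δ - 1) * t ^ n := h2
          _ ≤ M * t ^ n := mul_le_mul_of_nonneg_right h3 (by positivity)
      have hM0 : 0 < M := lt_of_lt_of_le one_pos (le_max_left _ _)
      have hpoch := abs_poch_le hBa (n+1)
      calc |poch (-δ) (n+1)| * (1 - x') ^ (δ - ((n+1:ℕ):ℝ)) * (t - x') ^ n / (n.factorial : ℝ) * t
          ≤ poch B (n+1) * (M * t ^ n) / (n.factorial : ℝ) * t := by
            have hfac : (0:ℝ) < (n.factorial : ℝ) := by positivity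
            apply mul_le_mul_of_nonneg_right _ ht0.le
            rw [div_le_div_iff_of_pos_right hfac]
            rw [mul_assoc]
            refine mul_le_mul hpoch key ?_ (poch_nonneg (by positivity) _)
            exact mul_nonneg (Real.rpow_pos_of_pos h1x _).le (pow_nonneg (by linarith) n)
        _ = M * (poch B (n+1) / n.factorial * t ^ (n+1)) := by ring
    exact habs
  -- conclude by squeeze
  have hM0 : 0 < M := lt_of_lt_of_le one_pos (le_max_left _ _)
  have h2 : Tendsto (fun n : ℕ => M * (poch B (n+1) / n.factorial * t ^ (n+1))) atTop (nhds 0) := by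
    simpa using (aux_tendsto_zero hB0 ht0 ht1).const_mul M
  have h3 : Tendsto (fun n : ℕ =>
      ∑ k ∈ Finset.range (n+1), poch (-δ) k / k.factorial * t ^ k) atTop (nhds ((1 - t) ^ δ)) := by
    rw [show nhds ((1-t)^δ) = nhds ((1-t)^δ - 0) by norm_num]
    have := squeeze_zero (fun n => abs_nonneg _) hrem h2
    have h4 : Tendsto (fun n : ℕ =>
        (1 - t) ^ δ - ∑ k ∈ Finset.range (n+1), poch (-δ) k / k.factorial * t ^ k)
        atTop (nhds 0) := by
      rwa [tendsto_zero_iff_abs_tendsto_zero]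
    simpa using (tendsto_const_nhds (x := (1-t)^δ)).sub h4
  exact (tendsto_add_atTop_iff_nat 1).mp h3

-- integrability of t^r * exp(-(x*t)) on [0,1]
lemma integrable_rpow_exp {r x : ℝ} (hr : -1 < r) :
    IntervalIntegrable (fun t : ℝ => t ^ r * Real.exp (-(x * t))) volume 0 1 := by
  apply (intervalIntegral.intervalIntegrable_rpow' hr).mul_continuousOn
  fun_prop

-- γ(ν,x)/x^ν = ∫₀¹ t^(ν-1) e^(-xt) dt
lemma lincGamma_div {ν x : ℝ} (hν : 0 < ν) (hx : 0 < x) :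
    lincGamma ν x / x ^ ν = ∫ t in (0:ℝ)..1, t ^ (ν - 1) * Real.exp (-(x * t)) := by
  have hx' : x ≠ 0 := hx.ne'
  have h1 : (∫ t in (0:ℝ)..1, (fun s : ℝ => s ^ (ν - 1) * Real.exp (-s)) (x * t))
      = x⁻¹ • ∫ s in (0:ℝ)..x, s ^ (ν - 1) * Real.exp (-s) := by
    have := intervalIntegral.integral_comp_mul_left
      (fun s : ℝ => s ^ (ν - 1) * Real.exp (-s)) hx' (a := 0) (b := 1)
    simpa using this
  have h2 : (∫ t in (0:ℝ)..1, (fun s : ℝ => s ^ (ν - 1) * Real.exp (-s)) (x * t))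
      = x ^ (ν - 1) * ∫ t in (0:ℝ)..1, t ^ (ν - 1) * Real.exp (-(x * t)) := by
    rw [← intervalIntegral.integral_const_mul]
    apply intervalIntegral.integral_congr
    intro t ht
    rw [Set.uIcc_of_le (by norm_num : (0:ℝ) ≤ 1)] at ht
    simp only
    rw [Real.mul_rpow hx.le ht.1]
    ring
  rw [h1] at h2
  have : lincGamma ν x = x * (x ^ (ν - 1) * ∫ t in (0:ℝ)..1, t ^ (ν - 1) * Real.exp (-(x * t))) := by
    rw [← h2, lincGamma]
    rw [smul_eq_mul, ← mul_assoc, mul_inv_cancel₀ hx', one_mul]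
  rw [this]
  rw [show x * (x ^ (ν-1) * ∫ t in (0:ℝ)..1, t ^ (ν-1) * Real.exp (-(x*t)))
    = (x * x ^ (ν-1)) * ∫ t in (0:ℝ)..1, t ^ (ν-1) * Real.exp (-(x*t)) by ring]
  have hxpow : x * x ^ (ν - 1) = x ^ ν := by
    nth_rewrite 1 [← Real.rpow_one x]
    rw [← Real.rpow_add hx]
    norm_num
  rw [hxpow, mul_comm, mul_div_assoc, div_self (Real.rpow_pos_of_pos hx ν).ne', mul_one]

noncomputable def pochC (δ : ℝ) : ℝ := ∑ k ∈ Finset.range ⌈δ⌉₊, |poch (-δ) k| / k.factorial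

lemma pochC_nonneg (δ : ℝ) : 0 ≤ pochC δ :=
  Finset.sum_nonneg fun k _ => by positivity

lemma S_bound {δ : ℝ} (hδ : -1 < δ) {t : ℝ} (ht0 : 0 < t) (ht1 : t < 1) (n : ℕ) :
    |∑ k ∈ Finset.range n, poch (-δ) k / k.factorial * t ^ k|
      ≤ 2 * pochC δ + (1 - t) ^ δ := by
  set m := ⌈δ⌉₊ with hmdef
  set u : ℕ → ℝ := fun k => poch (-δ) k / k.factorial * t ^ k with hu
  have hm : (0:ℝ) ≤ -δ + m := by
    have := Nat.le_ceil δ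
    linarith
  have habs_u : ∀ k, |u k| ≤ |poch (-δ) k| / k.factorial := by
    intro k
    rw [hu]
    simp only [abs_mul, abs_div]
    rw [abs_of_pos (pow_pos ht0 k), abs_of_pos (show (0:ℝ) < k.factorial by positivity)]
    calc |poch (-δ) k| / k.factorial * t ^ k ≤ |poch (-δ) k| / k.factorial * 1 := by
          apply mul_le_mul_of_nonneg_left _ (by positivity)
          exact pow_le_one₀ ht0.le ht1.le
      _ = |poch (-δ) k| / k.factorial := mul_one _
  have hC : ∀ s : Finset ℕ, s ⊆ Finset.range m → |∑ k ∈ s, u k| ≤ pochC δ := by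
    intro s hs
    calc |∑ k ∈ s, u k| ≤ ∑ k ∈ s, |u k| := Finset.abs_sum_le_sum_abs _ _
      _ ≤ ∑ k ∈ s, |poch (-δ) k| / k.factorial := Finset.sum_le_sum fun k _ => habs_u k
      _ ≤ pochC δ := Finset.sum_le_sum_of_subset_of_nonneg hs fun k _ _ => by positivity
  have hLpos : (0:ℝ) < (1 - t) ^ δ := Real.rpow_pos_of_pos (by linarith) δ
  rcases le_or_gt n m with hnm | hmn
  · -- n ≤ m : whole sum is inside the head
    calc |∑ k ∈ Finset.range n, u k| ≤ pochC δ :=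
          hC _ (Finset.range_subset_range.mpr hnm)
      _ ≤ 2 * pochC δ + (1 - t) ^ δ := by
          have := pochC_nonneg δ; linarith
  · -- n > m
    have hsplit : ∀ N, m ≤ N → ∑ k ∈ Finset.range N, u k
        = (∑ k ∈ Finset.range m, u k) + ∑ k ∈ Finset.Ico m N, u k := by
      intro N hN
      rw [Finset.range_eq_Ico, Finset.range_eq_Ico]
      exact (Finset.sum_Ico_consecutive u (Nat.zero_le m) hN).symm
    set H := ∑ k ∈ Finset.range m, u k with hH
    set P := poch (-δ) m with hP
    have hsign : ∀ k, m ≤ k → ∃ v : ℝ, 0 ≤ v ∧ u k = P * v := by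
      intro k hk
      obtain ⟨q, hq0, hq⟩ := poch_tail hm k hk
      exact ⟨q / k.factorial * t ^ k, by positivity, by rw [hu]; simp only; rw [hq]; ring⟩
    set A : ℕ → ℝ := fun N => ∑ k ∈ Finset.Ico m N, |u k| with hA
    have hTA : ∀ N, |∑ k ∈ Finset.Ico m N, u k| = A N := by
      intro N
      rcases le_or_gt 0 P with hP0 | hP0
      · rw [Finset.abs_sum_of_nonneg]
        · exact Finset.sum_congr rfl fun k hk => (abs_of_nonneg (by
            obtain ⟨v, hv0, hv⟩ := hsign k (Finset.mem_Ico.mp hk).1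
            rw [hv]; positivity)).symm
        · intro k hk
          obtain ⟨v, hv0, hv⟩ := hsign k (Finset.mem_Ico.mp hk).1
          rw [hv]; positivity
      · have hneg : ∀ k ∈ Finset.Ico m N, u k ≤ 0 := by
          intro k hk
          obtain ⟨v, hv0, hv⟩ := hsign k (Finset.mem_Ico.mp hk).1
          rw [hv]
          exact mul_nonpos_of_nonpos_of_nonneg hP0.le hv0
        have : |∑ k ∈ Finset.Ico m N, u k| = -∑ k ∈ Finset.Ico m N, u k := by
          rw [abs_of_nonpos (Finset.sum_nonpos hneg)]
        rw [this, ← Finset.sum_neg_distrib]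
        exact Finset.sum_congr rfl fun k hk => by rw [abs_of_nonpos (hneg k hk)]
    have hAmono : Monotone A := by
      intro n1 n2 h12
      apply Finset.sum_le_sum_of_subset_of_nonneg
      · exact Finset.Ico_subset_Ico le_rfl h12
      · intro k _ _; positivity
    have hTlim : Tendsto (fun N => ∑ k ∈ Finset.Ico m N, u k) atTop
        (nhds ((1 - t) ^ δ - H)) := by
      have h1 := (binom_tendsto hδ ht0 ht1).sub_const H
      refine h1.congr' ?_
      filter_upwards [eventually_ge_atTop m] with N hN
      rw [hsplit N hN]; ring
    have hAlim : Tendsto A atTop (nhds |(1 - t) ^ δ - H|) := by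
      have := hTlim.abs
      refine this.congr' ?_
      filter_upwards [] with N
      exact hTA N
    have hAle : ∀ N, A N ≤ |(1 - t) ^ δ - H| := fun N => hAmono.ge_of_tendsto hAlim N
    have hHC : |H| ≤ pochC δ := hC _ (by rfl)
    calc |∑ k ∈ Finset.range n, u k| = |H + ∑ k ∈ Finset.Ico m n, u k| := by
          rw [hsplit n hmn.le]
      _ ≤ |H| + |∑ k ∈ Finset.Ico m n, u k| := abs_add_le _ _
      _ = |H| + A n := by rw [hTA n]
      _ ≤ |H| + |(1 - t) ^ δ - H| := by linarith [hAle n]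
      _ ≤ |H| + ((1 - t) ^ δ + |H|) := by
          have : |(1 - t) ^ δ - H| ≤ |(1 - t) ^ δ| + |H| := abs_sub _ _
          rw [abs_of_pos hLpos] at this
          linarith
      _ ≤ 2 * pochC δ + (1 - t) ^ δ := by linarith

-- integrability of t^(α-1) (1-t)^δ on (0,1)
lemma integrable_beta_like {α δ : ℝ} (hα : 0 < α) (hδ : -1 < δ) :
    IntervalIntegrable (fun t : ℝ => t ^ (α - 1) * (1 - t) ^ δ) volume 0 1 := by
  have h1 : IntervalIntegrable (fun t : ℝ => t ^ (α - 1) * (1 - t) ^ δ) volume 0 (1/2) := by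
    apply (intervalIntegral.intervalIntegrable_rpow' (by linarith)).mul_continuousOn
    intro t ht
    rw [Set.uIcc_of_le (by norm_num : (0:ℝ) ≤ 1/2)] at ht
    have : (1:ℝ) - t ≠ 0 := by have := ht.2; intro h; norm_num at h; linarith
    exact ((Real.continuousAt_rpow_const _ _ (Or.inl this)).comp
      (by fun_prop : Continuous (fun t : ℝ => 1 - t)).continuousAt).continuousWithinAt
  have h2 : IntervalIntegrable (fun t : ℝ => t ^ (α - 1) * (1 - t) ^ δ) volume (1/2) 1 := by
    have hbase : IntervalIntegrable (fun s : ℝ => s ^ δ) volume 0 (1/2) :=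
      intervalIntegral.intervalIntegrable_rpow' hδ
    have hcomp := hbase.comp_sub_left 1
    norm_num at hcomp
    -- hcomp : IntervalIntegrable (fun t => (1 - t) ^ δ) volume 1 (1/2)
    apply IntervalIntegrable.continuousOn_mul hcomp.symm
    intro t ht
    rw [Set.uIcc_of_le (by norm_num : (1:ℝ)/2 ≤ 1)] at ht
    have : t ≠ 0 := by have := ht.1; intro h; rw [h] at this; norm_num at this
    exact (Real.continuousAt_rpow_const _ _ (Or.inl this)).continuousWithinAt
  exact h1.trans h2

theorem kummer_gamma_series_converges
    (α : ℝ) (hα : 0 < α) (δ : ℝ) (hδ : -1 < δ) (x : ℝ) (hx : 0 < x) :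
    Filter.Tendsto
      (fun n : ℕ => ∑ k ∈ Finset.range n,
        poch (-δ) k / (k.factorial : ℝ) * (lincGamma (α + k) x / x ^ (α + (k:ℝ))))
      Filter.atTop (nhds (NKummer α δ x)) := by
  set μ := volume.restrict (Ioo (0:ℝ) 1) with hμ
  set c : ℕ → ℝ := fun k => poch (-δ) k / k.factorial with hc
  set F : ℕ → ℝ → ℝ := fun n t =>
    t ^ (α - 1) * (∑ k ∈ Finset.range n, c k * t ^ k) * Real.exp (-(x * t)) with hF
  set f : ℝ → ℝ := fun t => t ^ (α - 1) * (1 - t) ^ δ * Real.exp (-(x * t)) with hf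
  -- each basic integrand is integrable on Ioo 0 1
  have hIk : ∀ k : ℕ, IntegrableOn (fun t : ℝ => t ^ (α + k - 1) * Real.exp (-(x * t)))
      (Ioo (0:ℝ) 1) volume := by
    intro k
    have h1 : (-1:ℝ) < α + k - 1 := by
      have : (0:ℝ) ≤ k := Nat.cast_nonneg k
      linarith
    exact ((integrable_rpow_exp h1).1).mono_set Ioo_subset_Ioc_self
  -- Step 1 : partial sums equal integrals of F n
  have hstep1 : ∀ n : ℕ,
      (∑ k ∈ Finset.range n, c k * (lincGamma (α + k) x / x ^ (α + (k:ℝ))))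
      = ∫ t, F n t ∂μ := by
    intro n
    have e1 : ∀ k : ℕ, lincGamma (α + k) x / x ^ (α + (k:ℝ))
        = ∫ t in Ioo (0:ℝ) 1, t ^ (α + k - 1) * Real.exp (-(x * t)) := by
      intro k
      rw [lincGamma_div (by positivity) hx]
      rw [intervalIntegral.integral_of_le zero_le_one, integral_Ioc_eq_integral_Ioo]
    calc ∑ k ∈ Finset.range n, c k * (lincGamma (α + k) x / x ^ (α + (k:ℝ)))
        = ∑ k ∈ Finset.range n, ∫ t in Ioo (0:ℝ) 1,
            c k * (t ^ (α + k - 1) * Real.exp (-(x * t))) := by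
          refine Finset.sum_congr rfl fun k _ => ?_
          rw [e1 k, ← integral_const_mul]
      _ = ∫ t in Ioo (0:ℝ) 1, ∑ k ∈ Finset.range n,
            c k * (t ^ (α + k - 1) * Real.exp (-(x * t))) := by
          rw [← integral_finset_sum]
          intro k _
          exact ((hIk k).const_mul (c k))
      _ = ∫ t, F n t ∂μ := by
          refine setIntegral_congr_fun measurableSet_Ioo fun t ht => ?_
          have ht0 : 0 < t := ht.1
          have hpow : ∀ k : ℕ, t ^ (α + k - 1) = t ^ (α - 1) * t ^ k := by
            intro k
            rw [← Real.rpow_natCast t k, ← Real.rpow_add ht0]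
            ring_nf
          simp only [hF, Finset.sum_mul, Finset.mul_sum]
          refine Finset.sum_congr rfl fun k _ => ?_
          rw [hpow k]
          ring
  simp only [hc] at hstep1
  simp only [hstep1]
  -- Step 2 : dominated convergence
  have hNK : NKummer α δ x = ∫ t, f t ∂μ := by
    rw [NKummer, intervalIntegral.integral_of_le zero_le_one, integral_Ioc_eq_integral_Ioo]
  rw [hNK]
  set bound : ℝ → ℝ := fun t => t ^ (α - 1) * (2 * pochC δ + (1 - t) ^ δ) with hbound
  apply tendsto_integral_of_dominated_convergence bound
  · -- measurability
    intro n
    apply ContinuousOn.aestronglyMeasurable _ measurableSet_Ioo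
    intro t ht
    have h1 : ContinuousWithinAt (fun t : ℝ => t ^ (α - 1)) (Ioo (0:ℝ) 1) t :=
      (Real.continuousAt_rpow_const _ _ (Or.inl ht.1.ne')).continuousWithinAt
    exact (h1.mul (by fun_prop : Continuous fun t : ℝ =>
      (∑ k ∈ Finset.range n, c k * t ^ k)).continuousWithinAt).mul
      (by fun_prop : Continuous fun t : ℝ => Real.exp (-(x * t))).continuousWithinAt
  · -- bound integrable
    have h1 : IntegrableOn (fun t : ℝ => 2 * pochC δ * t ^ (α - 1)
        + t ^ (α - 1) * (1 - t) ^ δ) (Ioo (0:ℝ) 1) volume := by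
      apply Integrable.add
      · exact (((intervalIntegral.intervalIntegrable_rpow' (by linarith)).1).mono_set
          Ioo_subset_Ioc_self).const_mul _
      · exact ((integrable_beta_like hα hδ).1).mono_set Ioo_subset_Ioc_self
    refine h1.congr (ae_of_all _ fun t => by simp only [hbound]; ring)
  · -- bound holds
    intro n
    rw [hμ, ae_restrict_iff' measurableSet_Ioo]
    refine ae_of_all _ fun t ht => ?_
    have ht0 : 0 < t := ht.1
    have ht1 : t < 1 := ht.2
    have hrp : (0:ℝ) < t ^ (α - 1) := Real.rpow_pos_of_pos ht0 _
    have hexp : Real.exp (-(x * t)) ≤ 1 := by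
      rw [Real.exp_le_one_iff]
      nlinarith
    have hexp0 : (0:ℝ) < Real.exp (-(x * t)) := Real.exp_pos _
    rw [Real.norm_eq_abs, hF]
    simp only
    rw [abs_mul, abs_mul, abs_of_pos hrp, abs_of_pos hexp0]
    calc t ^ (α - 1) * |∑ k ∈ Finset.range n, c k * t ^ k| * Real.exp (-(x * t))
        ≤ t ^ (α - 1) * (2 * pochC δ + (1 - t) ^ δ) * 1 := by
          have hb0 : 0 ≤ t ^ (α - 1) * (2 * pochC δ + (1 - t) ^ δ) := by
            have h1 := pochC_nonneg δ
            have h2 := Real.rpow_nonneg (by linarith : (0:ℝ) ≤ 1 - t) δ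
            have := hrp.le
            positivity
          apply mul_le_mul _ hexp hexp0.le hb0
          exact mul_le_mul_of_nonneg_left (S_bound hδ ht0 ht1 n) hrp.le
      _ = bound t := by rw [hbound]; ring
  · -- pointwise convergence
    rw [hμ, ae_restrict_iff' measurableSet_Ioo]
    refine ae_of_all _ fun t ht => ?_
    have := ((binom_tendsto hδ ht.1 ht.2).const_mul (t ^ (α - 1))).mul_const
      (Real.exp (-(x * t)))
    exact this
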